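/- Minimization property of the majorant over the primal variable: with the setting of the error equality, for any ỹ ∈ D(A*), ‖y − ỹ‖² + ‖A*(y − ỹ)‖² = min over φ ∈ D(A) of M(φ, ỹ), where M(φ, ỹ) = ‖f − φ − A*ỹ‖² + ‖ỹ − Aφ‖², and the minimum is attained at φ = x. -/

import Mathlib

open scoped ComplexInnerProductSpace

lemma key_expand
    {H1 H2 : Type*} [NormedAddCommGroup H1] [InnerProductSpace ℂ H1] [CompleteSpace H1]
    [NormedAddCommGroup H2] [InnerProductSpace ℂ H2] [CompleteSpace H2]
    (A : H1 →ₗ.[ℂ] H2) (hd : Dense (A.domain : Set H1))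
    (e : A.adjoint.domain) (u : A.domain) :
    ‖A.adjoint e + (u : H1)‖ ^ 2 + ‖A u - (e : H2)‖ ^ 2
      = ‖(e : H2)‖ ^ 2 + ‖A.adjoint e‖ ^ 2 + (‖(u : H1)‖ ^ 2 + ‖A u‖ ^ 2) := by
  have hadj := A.adjoint_isFormalAdjoint hd e u
  have hre : RCLike.re (inner ℂ (A.adjoint e) (u : H1) : ℂ)
      = RCLike.re (inner ℂ (A u) (e : H2) : ℂ) := by
    rw [hadj]; exact inner_re_symm _ _
  have h1 := @norm_add_sq ℂ _ _ _ _ (A.adjoint e) (u : H1)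
  have h2 := @norm_sub_sq ℂ _ _ _ _ (A u) (e : H2)
  rw [h1, h2, hre]
  ring

/-- Minimization property of the majorant over the primal variable:
the dual error equals the minimum of the majorant over φ ∈ D(A),
attained at φ = x. -/
theorem stmt_5
    {H1 H2 : Type*} [NormedAddCommGroup H1] [InnerProductSpace ℂ H1] [CompleteSpace H1]
    [NormedAddCommGroup H2] [InnerProductSpace ℂ H2] [CompleteSpace H2]
    (A : H1 →ₗ.[ℂ] H2) (hd : Dense (A.domain : Set H1)) (hc : A.IsClosed)
    (f : H1) (x : A.domain) (y : A.adjoint.domain)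
    (h1 : A.adjoint y + (x : H1) = f) (h2 : A x = (y : H2))
    (yt : A.adjoint.domain) :
    (∀ φ : A.domain,
      ‖(y : H2) - (yt : H2)‖ ^ 2 + ‖A.adjoint (y - yt)‖ ^ 2
        ≤ ‖f - (φ : H1) - A.adjoint yt‖ ^ 2 + ‖(yt : H2) - A φ‖ ^ 2) ∧
    ‖(y : H2) - (yt : H2)‖ ^ 2 + ‖A.adjoint (y - yt)‖ ^ 2
      = ‖f - (x : H1) - A.adjoint yt‖ ^ 2 + ‖(yt : H2) - A x‖ ^ 2 := by
  have coe_sub : ((y - yt : A.adjoint.domain) : H2) = (y : H2) - (yt : H2) := rfl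
  have key : ∀ φ : A.domain,
      ‖f - (φ : H1) - A.adjoint yt‖ ^ 2 + ‖(yt : H2) - A φ‖ ^ 2
        = ‖(y : H2) - (yt : H2)‖ ^ 2 + ‖A.adjoint (y - yt)‖ ^ 2
          + (‖((x - φ : A.domain) : H1)‖ ^ 2 + ‖A (x - φ)‖ ^ 2) := by
    intro φ
    have e1 : f - (φ : H1) - A.adjoint yt
        = A.adjoint (y - yt) + ((x - φ : A.domain) : H1) := by
      rw [A.adjoint.map_sub]
      push_cast
      rw [← h1]; abel
    have e2 : (yt : H2) - A φ = A (x - φ) - ((y - yt : A.adjoint.domain) : H2) := by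
      rw [A.map_sub, coe_sub, h2]; abel
    rw [e1, e2, key_expand A hd (y - yt) (x - φ), coe_sub]
  constructor
  · intro φ
    rw [key φ]
    have : (0:ℝ) ≤ ‖((x - φ : A.domain) : H1)‖ ^ 2 + ‖A (x - φ)‖ ^ 2 :=
      add_nonneg (sq_nonneg _) (sq_nonneg _)
    linarith
  · rw [key x]
    simp
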